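/- Let T : X → X be a proper map on a locally compact separable space and T̃ its extension to the one-point compactification X̃. Then h(T) = h(T̃), where h denotes topological entropy (via admissible coverings on X, and the usual AKM entropy on the compact space X̃). -/

import Mathlib

open Set Filter Topology

/-- A map is proper if it is continuous and preimages of compact sets are compact. -/
def IsProper {X Y : Type*} [TopologicalSpace X] [TopologicalSpace Y] (f : X → Y) : Prop :=
  Continuous f ∧ ∀ K : Set Y, IsCompact K → IsCompact (f ⁻¹' K)

/-- An admissible covering: open, finite, covers, and each element has compact
closure or compact complement. -/
def IsAdmissibleCover {X : Type*} [TopologicalSpace X] (α : Set (Set X)) : Prop :=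
  α.Finite ∧ (∀ A ∈ α, IsOpen A) ∧ ⋃₀ α = univ ∧
    ∀ A ∈ α, IsCompact (closure A) ∨ IsCompact Aᶜ

/-- `coverIter T α n` is the collection of sets `A₀ ∩ T⁻¹ A₁ ∩ ⋯ ∩ T⁻⁽ⁿ⁻¹⁾ A_{n-1}`
with all `Aᵢ ∈ α`; the paper's `αⁿ` is `coverIter T α (n+1)`. -/
def coverIter {X : Type*} (T : X → X) (α : Set (Set X)) (n : ℕ) : Set (Set X) :=
  {B | ∃ A : Fin n → Set X, (∀ i, A i ∈ α) ∧ B = ⋂ i : Fin n, T^[i.val] ⁻¹' A i}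

/-- `coverNum β` is the minimal cardinality of a (finite) subcover of `β`. -/
noncomputable def coverNum {X : Type*} (β : Set (Set X)) : ℕ :=
  sInf {k | ∃ γ ⊆ β, γ.Finite ∧ ⋃₀ γ = univ ∧ γ.ncard = k}

/-- `h(T, α) = lim (1/n) log N(αⁿ)` (as a limsup, valued in `EReal`). -/
noncomputable def coverEntropyOf {X : Type*} (T : X → X) (α : Set (Set X)) : EReal :=
  Filter.limsup (fun n : ℕ => ((Real.log (coverNum (coverIter T α n)) / n : ℝ) : EReal)) Filter.atTop

/-- The topological entropy `h(T)`, the supremum of `h(T, α)` over admissible coverings. -/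
noncomputable def topEntropy {X : Type*} [TopologicalSpace X] (T : X → X) : EReal :=
  ⨆ (α : Set (Set X)) (_ : IsAdmissibleCover α), coverEntropyOf T α

/-- The extension of `T : X → X` to the one-point compactification, fixing `∞`. -/
def onePointExt {X : Type*} (T : X → X) : OnePoint X → OnePoint X := Option.map T

section Basics
variable {X : Type*}

lemma onePointExt_iterate (T : X → X) (j : ℕ) :
    (onePointExt T)^[j] = onePointExt (T^[j]) := by
  induction j with
  | zero => simp [onePointExt, Option.map_id]; exact Function.iterate_zero _
  | succ j ih =>
      rw [Function.iterate_succ', ih, Function.iterate_succ']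
      show Option.map T ∘ Option.map (T^[j]) = _
      rw [Option.map_comp_map]
      rfl

lemma preimage_coe_iterate (T : X → X) (j : ℕ) (B : Set (OnePoint X)) :
    (OnePoint.some) ⁻¹' ((onePointExt T)^[j] ⁻¹' B) = T^[j] ⁻¹' (OnePoint.some ⁻¹' B) := by
  rw [onePointExt_iterate]; rfl

lemma iterate_infty (T : X → X) (j : ℕ) :
    (onePointExt T)^[j] (OnePoint.infty) = OnePoint.infty := by
  rw [onePointExt_iterate]; rfl

lemma iterate_coe (T : X → X) (j : ℕ) (x : X) :
    (onePointExt T)^[j] (OnePoint.some x) = OnePoint.some (T^[j] x) := by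
  rw [onePointExt_iterate]; rfl

lemma coverIter_finite {T : X → X} {α : Set (Set X)} (hα : α.Finite) (n : ℕ) :
    (coverIter T α n).Finite := by
  have hsub : coverIter T α n ⊆
      (fun A : Fin n → Set X => ⋂ i : Fin n, T^[i.val] ⁻¹' A i) '' {A | ∀ i, A i ∈ α} := by
    rintro B ⟨A, hA, rfl⟩; exact ⟨A, hA, rfl⟩
  refine Set.Finite.subset (Set.Finite.image _ ?_) hsub
  have hpi : {A : Fin n → Set X | ∀ i, A i ∈ α} = Set.pi univ (fun _ => α) := by
    ext A; simp [Set.mem_pi]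
  rw [hpi]
  exact Set.Finite.pi (fun _ => hα)

lemma coverIter_sUnion {T : X → X} {α : Set (Set X)} (hα : ⋃₀ α = univ) (n : ℕ) :
    ⋃₀ (coverIter T α n) = univ := by
  apply eq_univ_of_forall
  intro x
  have h : ∀ i : Fin n, ∃ A ∈ α, T^[i.val] x ∈ A := by
    intro i
    have : T^[i.val] x ∈ ⋃₀ α := by rw [hα]; trivial
    simpa using this
  choose A hA hxA using h
  exact ⟨⋂ i : Fin n, T^[i.val] ⁻¹' A i, ⟨A, hA, rfl⟩, by simpa using hxA⟩

lemma coverNum_le' {β : Set (Set X)} {γ : Set (Set X)} (hsub : γ ⊆ β) (hfin : γ.Finite)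
    (hcov : ⋃₀ γ = univ) {k : ℕ} (hk : γ.ncard ≤ k) : coverNum β ≤ k :=
  le_trans (Nat.sInf_le ⟨γ, hsub, hfin, hcov, rfl⟩) hk

lemma coverNum_spec {β : Set (Set X)} (hfin : β.Finite) (hcov : ⋃₀ β = univ) :
    ∃ γ ⊆ β, γ.Finite ∧ ⋃₀ γ = univ ∧ γ.ncard = coverNum β :=
  Nat.sInf_mem (⟨β.ncard, β, le_refl _, hfin, hcov, rfl⟩ :
    Set.Nonempty {k | ∃ γ ⊆ β, γ.Finite ∧ ⋃₀ γ = univ ∧ γ.ncard = k})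

end Basics


lemma log_nat_nonneg (k : ℕ) : 0 ≤ Real.log k := by
  rcases Nat.eq_zero_or_pos k with h | h
  · simp [h]
  · exact Real.log_nonneg (by exact_mod_cast h)

lemma log_nat_mono {p q : ℕ} (h : p ≤ q) : Real.log p ≤ Real.log q := by
  rcases Nat.eq_zero_or_pos p with h0 | h0
  · simpa [h0] using log_nat_nonneg q
  · exact Real.log_le_log (by exact_mod_cast h0) (by exact_mod_cast h)

lemma limsup_lognat_nonneg (f : ℕ → ℕ) :
    0 ≤ limsup (fun N : ℕ => ((Real.log (f N) / N : ℝ) : EReal)) atTop := by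
  have h0 : (0 : EReal) = limsup (fun _ : ℕ => (0 : EReal)) atTop := (limsup_const _).symm
  rw [h0]
  refine limsup_le_limsup (Eventually.of_forall fun N => ?_)
  have h : (0:ℝ) ≤ Real.log (f N) / N := div_nonneg (log_nat_nonneg _) (by positivity)
  exact EReal.coe_nonneg.2 h

lemma analytic_lemma (Nb M : ℕ → ℕ) (m : ℕ) (hm : 1 ≤ m) (hmono : Monotone Nb)
    (hbound : ∀ n : ℕ, Nb (n * m) ≤ 2 ^ n * M (n * m) + 1) :
    limsup (fun N : ℕ => ((Real.log (Nb N) / N : ℝ) : EReal)) atTop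
      ≤ ((Real.log 2 / m : ℝ) : EReal)
        + limsup (fun N : ℕ => ((Real.log (M N) / N : ℝ) : EReal)) atTop := by
  set u : ℕ → EReal := fun N => ((Real.log (M N) / N : ℝ) : EReal) with hu
  set v : ℕ → EReal := fun N => ((Real.log (Nb N) / N : ℝ) : EReal) with hv
  have hstar0 : 0 ≤ limsup u atTop := limsup_lognat_nonneg M
  by_cases htop : limsup u atTop = ⊤
  · rw [htop, EReal.coe_add_top]
    exact le_top
  have H : ∀ a : ℝ, limsup u atTop < (a : EReal) →
      limsup v atTop ≤ ((Real.log 2 / m + a : ℝ) : EReal) := by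
    intro a ha
    have ha0 : (0:ℝ) < a := by
      have h : (0 : EReal) < (a : EReal) := lt_of_le_of_lt hstar0 ha
      exact_mod_cast h
    have hev : ∀ᶠ K in (atTop : Filter ℕ), Real.log (M K) / K < a := by
      filter_upwards [Filter.eventually_lt_of_limsup_lt ha] with K hK
      exact EReal.coe_lt_coe_iff.1 hK
    obtain ⟨K₀, hK₀⟩ := eventually_atTop.1 hev
    set w : ℕ → ℝ := fun N =>
      (((N:ℝ)/m + 2) * Real.log 2 + a * ((N:ℝ) + m)) / N with hw
    have hmpos : (0:ℝ) < m := by exact_mod_cast hm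
    have hle : ∀ᶠ N in (atTop : Filter ℕ), v N ≤ ((w N : ℝ) : EReal) := by
      rw [eventually_atTop]
      refine ⟨max K₀ 1, fun N hN => ?_⟩
      have hN1 : 1 ≤ N := le_trans (le_max_right _ _) hN
      have hNK : K₀ ≤ N := le_trans (le_max_left _ _) hN
      set n : ℕ := (N + m - 1) / m with hn
      set N' : ℕ := n * m with hN'
      have hdm : m * n + (N + m - 1) % m = N + m - 1 := Nat.div_add_mod (N + m - 1) m
      have hdm' : n * m + (N + m - 1) % m = N + m - 1 := by rw [mul_comm]; exact hdm
      have hmod : (N + m - 1) % m < m := Nat.mod_lt _ hm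
      have hNN' : N ≤ N' := by rw [hN']; omega
      have hN'N : N' ≤ N + m := by rw [hN']; omega
      have hNpos : (0:ℝ) < N := by exact_mod_cast hN1
      have hlog2 : (0:ℝ) ≤ Real.log 2 := log_nat_nonneg 2
      have hN'pos : (0:ℝ) < N' := by
        have : 1 ≤ N' := le_trans hN1 hNN'
        exact_mod_cast this
      rcases Nat.eq_zero_or_pos (M N') with h0 | h0
      · -- degenerate case : M N' = 0, so Nb N ≤ 1
        have hnb : Nb N ≤ 1 := by
          have := hbound n
          rw [h0] at this
          simpa using le_trans (hmono hNN') this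
        have hlogNb : Real.log (Nb N) ≤ 0 := by
          have := log_nat_mono hnb
          simpa using this
        have hw0 : 0 ≤ w N := by
          rw [hw]
          have hterm : (0:ℝ) ≤ ((N:ℝ)/m + 2) * Real.log 2 + a * ((N:ℝ) + m) := by
            have c1 : (0:ℝ) ≤ (N:ℝ)/m + 2 := by positivity
            have c2 : (0:ℝ) ≤ (N:ℝ) + m := by positivity
            nlinarith
          exact div_nonneg hterm hNpos.le
        refine EReal.coe_le_coe_iff.2 ?_
        calc Real.log (Nb N) / N ≤ 0 := div_nonpos_of_nonpos_of_nonneg hlogNb hNpos.le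
          _ ≤ w N := hw0
      -- main case
      have hnat : Nb N ≤ 2 ^ (n + 1) * M N' := by
        have h1 : 1 ≤ 2 ^ n * M N' := by
          have h2 : (0:ℕ) < 2 ^ n := Nat.pow_pos (by norm_num)
          exact Nat.one_le_iff_ne_zero.2 (Nat.mul_ne_zero (by omega) (by omega))
        calc Nb N ≤ Nb N' := hmono hNN'
          _ ≤ 2 ^ n * M N' + 1 := hbound n
          _ ≤ 2 ^ n * M N' + 2 ^ n * M N' := Nat.add_le_add_left h1 _
          _ = 2 ^ (n + 1) * M N' := by ring
      have hlogM' : Real.log (M N') ≤ a * N' := by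
        have hlt := hK₀ N' (le_trans hNK hNN')
        have := (div_lt_iff₀ hN'pos).1 hlt
        linarith
      have hlogNb : Real.log (Nb N) ≤ ((n:ℝ) + 1) * Real.log 2 + a * N' := by
        have hM0 : (0:ℝ) < (M N' : ℝ) := by exact_mod_cast h0
        have hcast : ((2 ^ (n + 1) * M N' : ℕ) : ℝ) = 2 ^ (n + 1) * (M N' : ℝ) := by
          push_cast; ring
        calc Real.log (Nb N) ≤ Real.log ((2 ^ (n + 1) * M N' : ℕ) : ℝ) := log_nat_mono hnat
          _ = ((n:ℝ) + 1) * Real.log 2 + Real.log (M N') := by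
              rw [hcast, Real.log_mul (by positivity) (by positivity), Real.log_pow]
              push_cast; ring
          _ ≤ ((n:ℝ) + 1) * Real.log 2 + a * N' := by linarith
      have hn_le : (n : ℝ) + 1 ≤ (N:ℝ)/m + 2 := by
        have h1 : (n : ℝ) ≤ ((N + m - 1 : ℕ) : ℝ) / m := Nat.cast_div_le
        have h2 : ((N + m - 1 : ℕ) : ℝ) = (N:ℝ) + m - 1 := by
          have hc : ((N + m - 1 : ℕ) : ℝ) = ((N + m : ℕ) : ℝ) - (1:ℕ) :=
            Nat.cast_sub (by omega)
          rw [hc]; push_cast; ring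
        have h3 : ((N:ℝ) + m - 1) / m ≤ (N:ℝ)/m + 1 := by
          rw [div_le_iff₀ hmpos, add_mul, div_mul_cancel₀ _ hmpos.ne', one_mul]
          linarith
        rw [h2] at h1
        linarith
      have hN'_le : (N' : ℝ) ≤ (N:ℝ) + m := by exact_mod_cast hN'N
      have hnum : Real.log (Nb N) ≤ ((N:ℝ)/m + 2) * Real.log 2 + a * ((N:ℝ) + m) := by
        have b1 : ((n:ℝ) + 1) * Real.log 2 ≤ ((N:ℝ)/m + 2) * Real.log 2 :=
          mul_le_mul_of_nonneg_right hn_le hlog2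
        have b2 : a * (N' : ℝ) ≤ a * ((N:ℝ) + m) :=
          mul_le_mul_of_nonneg_left hN'_le ha0.le
        linarith
      have hfin : Real.log (Nb N) / N ≤ w N := (div_le_div_iff_of_pos_right hNpos).2 hnum
      exact EReal.coe_le_coe_iff.2 hfin
    have hwt : Tendsto w atTop (nhds (Real.log 2 / m + a)) := by
      have heq : ∀ᶠ N in (atTop : Filter ℕ), w N
          = Real.log 2 / m + a + (2 * Real.log 2 + a * m) / N := by
        rw [eventually_atTop]
        refine ⟨1, fun N hN => ?_⟩
        have hNpos : (0:ℝ) < N := by exact_mod_cast hN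
        rw [hw]
        field_simp
        ring
      have ht : Tendsto (fun N : ℕ => Real.log 2 / m + a + (2 * Real.log 2 + a * m) / N)
          atTop (nhds (Real.log 2 / m + a + 0)) :=
        tendsto_const_nhds.add (tendsto_const_div_atTop_nhds_zero_nat _)
      rw [add_zero] at ht
      exact ht.congr' (heq.mono fun N hN => hN.symm)
    have hlim : limsup (fun N : ℕ => ((w N : ℝ) : EReal)) atTop
        = ((Real.log 2 / m + a : ℝ) : EReal) :=
      Filter.Tendsto.limsup_eq (EReal.tendsto_coe.2 hwt)
    calc limsup v atTop ≤ limsup (fun N : ℕ => ((w N : ℝ) : EReal)) atTop :=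
          limsup_le_limsup hle
      _ = _ := hlim
  have hbot : limsup u atTop ≠ ⊥ := by
    intro h; rw [h] at hstar0; exact absurd hstar0 (by simp)
  lift limsup u atTop to ℝ using ⟨htop, hbot⟩ with r0 hr0
  rw [← EReal.coe_add]
  by_contra hcon
  push_neg at hcon
  obtain ⟨b, hb1, hb2⟩ := exists_between hcon
  have hbne : b ≠ ⊤ := ne_top_of_lt hb2
  have hbne' : b ≠ ⊥ := ne_bot_of_gt hb1
  lift b to ℝ using ⟨hbne, hbne'⟩ with rb hrb
  have hr : Real.log 2 / m + r0 < rb := EReal.coe_lt_coe_iff.1 hb1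
  have hH := H (rb - Real.log 2 / m)
    (EReal.coe_lt_coe_iff.2 (by linarith))
  rw [(by ring : Real.log 2 / m + (rb - Real.log 2 / m) = rb)] at hH
  exact absurd (lt_of_le_of_lt hH hb2) (lt_irrefl _)

lemma limsup_lognat_mono {f g : ℕ → ℕ} (h : ∀ n, f n ≤ g n) :
    limsup (fun N : ℕ => ((Real.log (f N) / N : ℝ) : EReal)) atTop
      ≤ limsup (fun N : ℕ => ((Real.log (g N) / N : ℝ) : EReal)) atTop := by
  refine limsup_le_limsup (Eventually.of_forall fun N => ?_)
  refine EReal.coe_le_coe_iff.2 ?_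
  rcases Nat.eq_zero_or_pos N with h0 | h0
  · simp [h0]
  · have : (0:ℝ) < N := by exact_mod_cast h0
    exact (div_le_div_iff_of_pos_right this).2 (log_nat_mono (h N))

lemma ereal_le_of_forall_log2_div {L y : EReal} (hy : 0 ≤ y)
    (h : ∀ m : ℕ, 1 ≤ m → L ≤ ((Real.log 2 / m : ℝ) : EReal) + y) : L ≤ y := by
  by_cases htop : y = ⊤
  · rw [htop]; exact le_top
  have hbot : y ≠ ⊥ := by
    intro hb; rw [hb] at hy; exact absurd hy (by simp)
  lift y to ℝ using ⟨htop, hbot⟩ with ry hry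
  by_contra hcon
  push_neg at hcon
  obtain ⟨b, hb1, hb2⟩ := exists_between hcon
  have hbne : b ≠ ⊤ := ne_top_of_lt hb2
  have hbne' : b ≠ ⊥ := ne_bot_of_gt hb1
  lift b to ℝ using ⟨hbne, hbne'⟩ with rb hrb
  have hr : ry < rb := EReal.coe_lt_coe_iff.1 hb1
  obtain ⟨m₀, hm₀⟩ := exists_nat_gt (Real.log 2 / (rb - ry))
  set m : ℕ := m₀ + 1 with hmdef
  have hm1 : 1 ≤ m := by omega
  have hmR : Real.log 2 / (rb - ry) < m := by
    have : (m₀ : ℝ) ≤ m := by exact_mod_cast Nat.le_succ m₀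
    linarith
  have hmpos : (0:ℝ) < m := by positivity
  have hdiv : Real.log 2 / m < rb - ry := by
    rw [div_lt_iff₀ hmpos]
    have hpos : (0:ℝ) < rb - ry := by linarith
    have := (div_lt_iff₀ hpos).1 hmR
    linarith
  have := h m hm1
  have hlt : ((Real.log 2 / m : ℝ) : EReal) + (ry : EReal) < (rb : EReal) := by
    rw [← EReal.coe_add]
    exact EReal.coe_lt_coe_iff.2 (by linarith)
  exact absurd (lt_of_le_of_lt (le_trans this hlt.le) hb2) (lt_irrefl _)

section Dir1
variable {X : Type*} [TopologicalSpace X]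

/-- extension of an admissible set to the one-point compactification -/
def extSet (A : Set X) : Set (OnePoint X) :=
  OnePoint.some '' A ∪ {y | y = OnePoint.infty ∧ IsCompact Aᶜ}

lemma preimage_coe_extSet (A : Set X) : OnePoint.some ⁻¹' extSet A = A := by
  ext x
  simp only [extSet, preimage_union, mem_union, mem_preimage, mem_setOf_eq]
  constructor
  · rintro (h | ⟨h, -⟩)
    · rcases h with ⟨y, hy, hyx⟩
      rwa [← OnePoint.coe_injective hyx]
    · exact absurd h (OnePoint.coe_ne_infty x)
  · intro h; exact Or.inl ⟨x, h, rfl⟩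

lemma infty_mem_extSet {A : Set X} (h : IsCompact Aᶜ) : OnePoint.infty ∈ extSet A :=
  Or.inr ⟨rfl, h⟩

lemma extSet_isOpen {A : Set X} (hA : IsOpen A) : IsOpen (extSet A) := by
  by_cases hc : IsCompact Aᶜ
  · have hmem : OnePoint.infty ∈ extSet A := infty_mem_extSet hc
    rw [OnePoint.isOpen_iff_of_mem hmem]
    rw [show ((OnePoint.some : X → OnePoint X) ⁻¹' extSet A) = A from preimage_coe_extSet A]
    exact ⟨hA.isClosed_compl, hc⟩
  · have : extSet A = OnePoint.some '' A := by
      rw [extSet]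
      ext y
      simp only [mem_union, mem_setOf_eq]
      exact ⟨fun h' => h'.elim id (fun ⟨_, h2⟩ => absurd h2 hc), Or.inl⟩
    rw [this]
    exact OnePoint.isOpen_image_coe.2 hA

lemma exists_compl_compact {α : Set (Set X)} (hα : IsAdmissibleCover α) (hne : Nonempty X) :
    ∃ A ∈ α, IsCompact Aᶜ := by
  obtain ⟨hfin, hopen, hcov, hside⟩ := hα
  by_contra hcon
  push_neg at hcon
  have hclos : ∀ A ∈ α, IsCompact (closure A) := by
    intro A hA
    rcases hside A hA with h | h
    · exact h
    · exact absurd h (hcon A hA)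
  have hbig : IsCompact (⋃ A ∈ α, closure A) := hfin.isCompact_biUnion hclos
  have hsub : (univ : Set X) ⊆ ⋃ A ∈ α, closure A := by
    rw [← hcov]
    rintro x ⟨A, hA, hxA⟩
    exact mem_biUnion hA (subset_closure hxA)
  have huniv : IsCompact (univ : Set X) := hbig.of_isClosed_subset isClosed_univ hsub
  obtain ⟨x⟩ := hne
  have hx : x ∈ ⋃₀ α := by rw [hcov]; trivial
  obtain ⟨A, hA, -⟩ := hx
  refine hcon A hA ?_
  exact huniv.of_isClosed_subset (hopen A hA).isClosed_compl (subset_univ _)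

lemma extCover_admissible {α : Set (Set X)} (hα : IsAdmissibleCover α) (hne : Nonempty X) :
    IsAdmissibleCover (extSet '' α) := by
  have hfin := hα.1
  have hopen := hα.2.1
  have hcov := hα.2.2.1
  refine ⟨hfin.image _, ?_, ?_, ?_⟩
  · rintro _ ⟨A, hA, rfl⟩
    exact extSet_isOpen (hopen A hA)
  · apply eq_univ_of_forall
    intro y
    induction y using OnePoint.rec with
    | infty =>
        obtain ⟨A, hA, hAc⟩ := exists_compl_compact hα hne
        exact ⟨extSet A, mem_image_of_mem _ hA, infty_mem_extSet hAc⟩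
    | coe x =>
        have hx : x ∈ ⋃₀ α := by rw [hcov]; trivial
        obtain ⟨A, hA, hxA⟩ := hx
        exact ⟨extSet A, mem_image_of_mem _ hA, Or.inl (mem_image_of_mem _ hxA)⟩
  · rintro _ ⟨A, hA, rfl⟩
    exact Or.inl isClosed_closure.isCompact

lemma dir1_coverNum {α : Set (Set X)} (T : X → X) (hα : IsAdmissibleCover α)
    (hne : Nonempty X) (n : ℕ) :
    coverNum (coverIter T α n) ≤ coverNum (coverIter (onePointExt T) (extSet '' α) n) := by
  obtain ⟨hfin, hopen, hcov, hside⟩ := hα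
  have hext := extCover_admissible ⟨hfin, hopen, hcov, hside⟩ hne
  obtain ⟨γ', hγ'sub, hγ'fin, hγ'cov, hγ'card⟩ :=
    coverNum_spec (coverIter_finite hext.1 n) (coverIter_sUnion hext.2.2.1 n)
  set γ : Set (Set X) := (fun B => OnePoint.some ⁻¹' B) '' γ' with hγ
  have hsub : γ ⊆ coverIter T α n := by
    rintro _ ⟨B', hB', rfl⟩
    obtain ⟨Ae, hAe, rfl⟩ := hγ'sub hB'
    have hchoice : ∀ i : Fin n, ∃ A ∈ α, extSet A = Ae i := fun i => by
      obtain ⟨A, hA, hAe⟩ := hAe i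
      exact ⟨A, hA, hAe⟩
    choose A hA hAe using hchoice
    refine ⟨A, hA, ?_⟩
    show OnePoint.some ⁻¹' (⋂ i : Fin n, (onePointExt T)^[i.val] ⁻¹' Ae i) = _
    rw [preimage_iInter]
    refine iInter_congr fun i => ?_
    rw [preimage_coe_iterate, ← hAe i, preimage_coe_extSet]
  have hcovγ : ⋃₀ γ = univ := by
    apply eq_univ_of_forall
    intro x
    have : (OnePoint.some x) ∈ ⋃₀ γ' := by rw [hγ'cov]; trivial
    obtain ⟨B', hB', hxB'⟩ := this
    exact ⟨OnePoint.some ⁻¹' B', mem_image_of_mem _ hB', hxB'⟩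
  refine coverNum_le' hsub ((hγ'fin).image _) hcovγ ?_
  rw [← hγ'card]
  exact Set.ncard_image_le hγ'fin

end Dir1

section Dir2
open Classical in
lemma coverNum_coverIter_mono {X : Type*} (T : X → X) (β : Set (Set X))
    (hfin : β.Finite) (hcov : ⋃₀ β = univ) {N N' : ℕ} (h : N ≤ N') :
    coverNum (coverIter T β N) ≤ coverNum (coverIter T β N') := by
  obtain ⟨γ', hsub, hγfin, hγcov, hcard⟩ :=
    coverNum_spec (coverIter_finite hfin N') (coverIter_sUnion hcov N')
  set F : Set X → Set X := fun C =>
    if hC : C ∈ coverIter T β N' then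
      ⋂ i : Fin N, T^[i.val] ⁻¹' (hC.choose (Fin.castLE h i))
    else univ with hF
  have hmemF : ∀ C ∈ coverIter T β N', F C ∈ coverIter T β N := by
    intro C hC
    rw [hF]; simp only [dif_pos hC]
    exact ⟨fun i => hC.choose (Fin.castLE h i), fun i => hC.choose_spec.1 _, rfl⟩
  have hsubF : ∀ C ∈ coverIter T β N', C ⊆ F C := by
    intro C hC x hx
    rw [hF]; simp only [dif_pos hC]
    rw [hC.choose_spec.2] at hx
    simp only [mem_iInter] at hx ⊢
    intro i
    exact hx (Fin.castLE h i)
  refine coverNum_le' (γ := F '' γ') ?_ (hγfin.image _) ?_ ?_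
  · rintro _ ⟨C, hC, rfl⟩
    exact hmemF C (hsub hC)
  · apply eq_univ_of_forall
    intro x
    have : x ∈ ⋃₀ γ' := by rw [hγcov]; trivial
    obtain ⟨C, hC, hxC⟩ := this
    exact ⟨F C, mem_image_of_mem _ hC, hsubF C (hsub hC) hxC⟩
  · rw [← hcard]
    exact Set.ncard_image_le hγfin

variable {X : Type*} [TopologicalSpace X]

open Classical in
/-- The key counting estimate for the hard direction. -/
lemma dir2_coverNum (T : X → X) (hT : IsProper T) (β : Set (Set (OnePoint X)))
    (hβ : IsAdmissibleCover β) {Binf : Set (OnePoint X)} (hBmem : Binf ∈ β)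
    (hBinf : OnePoint.infty ∈ Binf) (m : ℕ) (hm : 1 ≤ m) (n : ℕ) :
    coverNum (coverIter (onePointExt T) β (n * m)) ≤
      2 ^ n * coverNum (coverIter T
        ((fun E => OnePoint.some ⁻¹' E ∪ (⋃ j : Fin m, T^[j.val] ⁻¹' (OnePoint.some ⁻¹' Binf)ᶜ)ᶜ) ''
          (coverIter (onePointExt T) β m)) (n * m)) + 1 := by
  set K : Set X := (OnePoint.some ⁻¹' Binf)ᶜ with hK
  set Cm : Set X := ⋃ j : Fin m, T^[j.val] ⁻¹' K with hCm
  set αm : Set (Set X) :=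
    (fun E => OnePoint.some ⁻¹' E ∪ Cmᶜ) '' (coverIter (onePointExt T) β m) with hαm
  -- the cover `αm` is finite and covers `X`
  have hαmfin : αm.Finite := (coverIter_finite hβ.1 m).image _
  have hαmcov : ⋃₀ αm = univ := by
    apply eq_univ_of_forall
    intro x
    have hx : (OnePoint.some x) ∈ ⋃₀ coverIter (onePointExt T) β m := by
      rw [coverIter_sUnion hβ.2.2.1 m]; trivial
    obtain ⟨E, hE, hxE⟩ := hx
    exact ⟨OnePoint.some ⁻¹' E ∪ Cmᶜ, mem_image_of_mem _ hE, Or.inl hxE⟩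
  -- a minimal subcover on the `X` side
  obtain ⟨Γ, hΓsub, hΓfin, hΓcov, hΓcard⟩ :=
    coverNum_spec (coverIter_finite hαmfin (n * m)) (coverIter_sUnion hαmcov (n * m))
  -- choice functions
  set Aof : Set X → Fin (n * m) → Set X := fun G =>
    if hG : G ∈ coverIter T αm (n * m) then hG.choose else fun _ => univ with hAof
  have hAspec : ∀ G ∈ coverIter T αm (n * m),
      (∀ i, Aof G i ∈ αm) ∧ G = ⋂ i : Fin (n * m), T^[i.val] ⁻¹' Aof G i := by
    intro G hG
    rw [hAof]; simp only [dif_pos hG]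
    exact hG.choose_spec
  set Eof : Set X → Set (OnePoint X) := fun A =>
    if hA : A ∈ αm then hA.choose else univ with hEof
  have hEspec : ∀ A ∈ αm, Eof A ∈ coverIter (onePointExt T) β m ∧
      OnePoint.some ⁻¹' (Eof A) ∪ Cmᶜ = A := by
    intro A hA
    rw [hEof]; simp only [dif_pos hA]
    exact hA.choose_spec
  set Bof : Set (OnePoint X) → Fin m → Set (OnePoint X) := fun E =>
    if hE : E ∈ coverIter (onePointExt T) β m then hE.choose else fun _ => Binf with hBof
  have hBspec : ∀ E ∈ coverIter (onePointExt T) β m,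
      (∀ j, Bof E j ∈ β) ∧ E = ⋂ j : Fin m, (onePointExt T)^[j.val] ⁻¹' Bof E j := by
    intro E hE
    rw [hBof]; simp only [dif_pos hE]
    exact hE.choose_spec
  have hidx1 : ∀ k : Fin (n * m), k.val / m * m < n * m := fun k =>
    lt_of_le_of_lt (Nat.div_mul_le_self _ _) k.isLt
  have hidx2 : ∀ k : Fin (n * m), k.val % m < m := fun k => Nat.mod_lt _ hm
  set D : Set X → Finset ℕ → Set (OnePoint X) := fun G S =>
    ⋂ k : Fin (n * m), (onePointExt T)^[k.val] ⁻¹'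
      (if k.val / m ∈ S then Bof (Eof (Aof G ⟨k.val / m * m, hidx1 k⟩)) ⟨k.val % m, hidx2 k⟩
       else Binf) with hD
  set Dinf : Set (OnePoint X) :=
    ⋂ k : Fin (n * m), (onePointExt T)^[k.val] ⁻¹' Binf with hDinf
  set ΓF : Finset (Set X) := hΓfin.toFinset with hΓF
  set bigΓ : Finset (Set (OnePoint X)) :=
    insert Dinf (Finset.image₂ D ΓF (Finset.range n).powerset) with hbigΓ
  -- each element of `bigΓ` is an element of the iterated cover on the compactification
  have hsub2 : ↑bigΓ ⊆ coverIter (onePointExt T) β (n * m) := by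
    intro Y hY
    rw [hbigΓ] at hY
    simp only [Finset.coe_insert, mem_insert_iff, Finset.coe_image₂, mem_image2] at hY
    rcases hY with rfl | ⟨G, hG, S, hS, rfl⟩
    · exact ⟨fun _ => Binf, fun _ => hBmem, rfl⟩
    · have hGmem : G ∈ coverIter T αm (n * m) := hΓsub (by simp only [hΓF, Finset.mem_coe, Set.Finite.mem_toFinset] at hG; exact hG)
      refine ⟨fun k => (if k.val / m ∈ S then
        Bof (Eof (Aof G ⟨k.val / m * m, hidx1 k⟩)) ⟨k.val % m, hidx2 k⟩ else Binf),
        fun k => ?_, rfl⟩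
      by_cases hkS : k.val / m ∈ S
      · simp only [if_pos hkS]
        have hA := (hAspec G hGmem).1 ⟨k.val / m * m, hidx1 k⟩
        have hE := (hEspec _ hA).1
        exact (hBspec _ hE).1 _
      · simp only [if_neg hkS]
        exact hBmem
  -- `bigΓ` covers everything
  have hcov2 : ⋃₀ (↑bigΓ : Set (Set (OnePoint X))) = univ := by
    apply eq_univ_of_forall
    intro q
    induction q using OnePoint.rec with
    | infty =>
        refine ⟨Dinf, by simp [hbigΓ], ?_⟩
        rw [hDinf]
        simp only [mem_iInter, mem_preimage]
        intro k
        rw [iterate_infty]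
        exact hBinf
    | coe x =>
        have hx : x ∈ ⋃₀ Γ := by rw [hΓcov]; trivial
        obtain ⟨G, hGΓ, hxG⟩ := hx
        have hGmem : G ∈ coverIter T αm (n * m) := hΓsub hGΓ
        set S : Finset ℕ :=
          (Finset.range n).filter (fun l => ∃ r < m, T^[l * m + r] x ∈ K) with hS
        refine ⟨D G S, ?_, ?_⟩
        · rw [hbigΓ]
          simp only [Finset.coe_insert, mem_insert_iff, Finset.coe_image₂, mem_image2]
          refine Or.inr ⟨G, ?_, S, ?_, rfl⟩
          · simp only [hΓF, Finset.mem_coe, Set.Finite.mem_toFinset]; exact hGΓ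
          · rw [Finset.mem_coe, Finset.mem_powerset, hS]; exact Finset.filter_subset _ _
        · rw [hD]
          simp only [mem_iInter, mem_preimage]
          intro k
          rw [iterate_coe]
          have hkdm : k.val / m * m + k.val % m = k.val := Nat.div_add_mod' k.val m
          by_cases hkS : k.val / m ∈ S
          · rw [if_pos hkS]
            -- x's orbit block meets K, so the A-letter must come from the E-part
            have hxA : T^[k.val / m * m] x ∈ Aof G ⟨k.val / m * m, hidx1 k⟩ := by
              have := hxG
              rw [(hAspec G hGmem).2] at this
              simp only [mem_iInter, mem_preimage] at this
              exact this ⟨k.val / m * m, hidx1 k⟩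
            have hA := (hAspec G hGmem).1 ⟨k.val / m * m, hidx1 k⟩
            have hEs := hEspec _ hA
            rw [← hEs.2] at hxA
            rcases (Set.mem_union _ _ _).1 hxA with hxE | hxC
            · -- in the E-part : conclude
              rw [(hBspec _ hEs.1).2] at hxE
              have hxE' : OnePoint.some (T^[k.val / m * m] x) ∈
                  ⋂ j : Fin m, (onePointExt T)^[j.val] ⁻¹' Bof (Eof (Aof G ⟨k.val / m * m, hidx1 k⟩)) j := hxE
              simp only [mem_iInter, mem_preimage] at hxE'
              have := hxE' ⟨k.val % m, hidx2 k⟩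
              rw [iterate_coe] at this
              rw [← Function.iterate_add_apply, Nat.add_comm, hkdm] at this
              exact this
            · -- in the Cmᶜ-part : contradiction with k/m ∈ S
              exfalso
              rw [hS, Finset.mem_filter] at hkS
              obtain ⟨r, hr, hrK⟩ := hkS.2
              have : T^[r] (T^[k.val / m * m] x) ∈ K := by
                rw [← Function.iterate_add_apply, Nat.add_comm]
                exact hrK
              refine hxC ?_
              rw [hCm]
              exact mem_iUnion.2 ⟨⟨r, hr⟩, this⟩
          · rw [if_neg hkS]
            -- x's orbit block avoids K at time k, so it is in Binf
            have hlr : k.val / m ∈ Finset.range n := by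
              rw [Finset.mem_range]
              have hk : k.val < n * m := k.isLt
              exact (Nat.div_lt_iff_lt_mul hm).2 (by omega)
            have hnotin : ¬∃ r < m, T^[k.val / m * m + r] x ∈ K := by
              intro hcon
              exact hkS (by rw [hS, Finset.mem_filter]; exact ⟨hlr, hcon⟩)
            push_neg at hnotin
            have hnk := hnotin (k.val % m) (hidx2 k)
            rw [hkdm] at hnk
            have hfin2 : T^[k.val] x ∈ OnePoint.some ⁻¹' Binf := by
              rw [hK] at hnk
              simpa using hnk
            exact hfin2
  -- cardinality bound
  have hcard2 : (↑bigΓ : Set (Set (OnePoint X))).ncard ≤ 2 ^ n * Γ.ncard + 1 := by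
    rw [Set.ncard_coe_finset]
    calc bigΓ.card ≤ (Finset.image₂ D ΓF (Finset.range n).powerset).card + 1 := by
          rw [hbigΓ]; exact Finset.card_insert_le _ _
      _ ≤ ΓF.card * (Finset.range n).powerset.card + 1 := by
          exact Nat.add_le_add_right (Finset.card_image₂_le _ _ _) 1
      _ = 2 ^ n * Γ.ncard + 1 := by
          rw [Finset.card_powerset, Finset.card_range, hΓF,
            ← Set.ncard_eq_toFinset_card Γ hΓfin]
          ring
  calc coverNum (coverIter (onePointExt T) β (n * m)) ≤ (↑bigΓ : Set (Set (OnePoint X))).ncard :=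
        coverNum_le' hsub2 (bigΓ.finite_toSet) hcov2 (le_refl _)
    _ ≤ 2 ^ n * Γ.ncard + 1 := hcard2
    _ = 2 ^ n * coverNum (coverIter T αm (n * m)) + 1 := by rw [hΓcard]

end Dir2

section Adm
variable {X : Type*} [TopologicalSpace X]

lemma admissible_univ : IsAdmissibleCover ({univ} : Set (Set X)) := by
  refine ⟨finite_singleton _, ?_, ?_, ?_⟩
  · rintro A rfl; exact isOpen_univ
  · rw [sUnion_singleton]
  · rintro A rfl
    exact Or.inr (by rw [compl_univ]; exact isCompact_empty)

lemma preimage_coe_coverIter_isOpen {T : X → X} (hT : Continuous T)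
    {β : Set (Set (OnePoint X))} (hβ : ∀ B ∈ β, IsOpen B) {m : ℕ}
    {E : Set (OnePoint X)} (hE : E ∈ coverIter (onePointExt T) β m) :
    IsOpen (OnePoint.some ⁻¹' E) := by
  obtain ⟨B, hB, rfl⟩ := hE
  rw [preimage_iInter]
  refine isOpen_iInter_of_finite fun j => ?_
  rw [preimage_coe_iterate]
  exact ((hβ (B j) (hB j)).preimage OnePoint.continuous_coe).preimage (hT.iterate _)

lemma iterK_compact {T : X → X} (hT : IsProper T) {K : Set X} (hK : IsCompact K) (j : ℕ) :
    IsCompact (T^[j] ⁻¹' K) := by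
  induction j with
  | zero => simpa using hK
  | succ j ih =>
      rw [Function.iterate_succ, Set.preimage_comp]
      exact hT.2 _ ih

lemma αm_admissible {T : X → X} (hT : IsProper T) {β : Set (Set (OnePoint X))}
    (hβ : IsAdmissibleCover β) {Binf : Set (OnePoint X)} (hBmem : Binf ∈ β)
    (hBinf : OnePoint.infty ∈ Binf) (m : ℕ) :
    IsAdmissibleCover
      ((fun E => OnePoint.some ⁻¹' E ∪ (⋃ j : Fin m, T^[j.val] ⁻¹' (OnePoint.some ⁻¹' Binf)ᶜ)ᶜ) ''
        (coverIter (onePointExt T) β m)) := by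
  set K : Set X := (OnePoint.some ⁻¹' Binf)ᶜ with hK
  set Cm : Set X := ⋃ j : Fin m, T^[j.val] ⁻¹' K with hCm
  have hBopen : IsOpen Binf := hβ.2.1 _ hBmem
  have hKcpt : IsCompact K := ((OnePoint.isOpen_iff_of_mem' hBinf).1 hBopen).1
  have hKcl : IsClosed K := (hBopen.preimage OnePoint.continuous_coe).isClosed_compl
  have hCmcpt : IsCompact Cm := isCompact_iUnion fun j => iterK_compact hT hKcpt j.val
  have hCmcl : IsClosed Cm :=
    isClosed_iUnion_of_finite fun j => hKcl.preimage (hT.1.iterate j.val)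
  refine ⟨(coverIter_finite hβ.1 m).image _, ?_, ?_, ?_⟩
  · rintro _ ⟨E, hE, rfl⟩
    exact (preimage_coe_coverIter_isOpen hT.1 hβ.2.1 hE).union hCmcl.isOpen_compl
  · apply eq_univ_of_forall
    intro x
    have hx : (OnePoint.some x) ∈ ⋃₀ coverIter (onePointExt T) β m := by
      rw [coverIter_sUnion hβ.2.2.1 m]; trivial
    obtain ⟨E, hE, hxE⟩ := hx
    exact ⟨_, mem_image_of_mem _ hE, Or.inl hxE⟩
  · rintro _ ⟨E, hE, rfl⟩
    refine Or.inr ?_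
    rw [compl_union, compl_compl]
    exact hCmcpt.inter_left (preimage_coe_coverIter_isOpen hT.1 hβ.2.1 hE).isClosed_compl

end Adm

section Assembly
variable {X : Type*} [TopologicalSpace X]

lemma topEntropy_nonneg (T : X → X) : 0 ≤ topEntropy T := by
  refine le_trans (limsup_lognat_nonneg (fun n => coverNum (coverIter T {univ} n))) ?_
  exact le_iSup₂ (f := fun α (_ : IsAdmissibleCover α) => coverEntropyOf T α)
    ({univ} : Set (Set X)) admissible_univ

lemma coverEntropyOf_eq_zero_of_isEmpty [IsEmpty X] (T : X → X) (α : Set (Set X)) :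
    coverEntropyOf T α = 0 := by
  have hnum : ∀ n, coverNum (coverIter T α n) = 0 := by
    intro n
    refine Nat.le_zero.1 (coverNum_le' (γ := (∅ : Set (Set X))) (empty_subset _)
      finite_empty ?_ (by simp))
    rw [sUnion_empty]
    exact (Set.univ_eq_empty_iff.2 ‹_›).symm
  have : (fun n : ℕ => ((Real.log (coverNum (coverIter T α n)) / n : ℝ) : EReal))
      = fun _ : ℕ => (0 : EReal) := by
    funext n
    rw [hnum n]
    simp
  rw [coverEntropyOf, this, limsup_const]

theorem dir1_top (T : X → X) : topEntropy T ≤ topEntropy (onePointExt T) := by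
  rcases isEmpty_or_nonempty X with hX | hX
  · refine iSup₂_le fun α hα => ?_
    rw [coverEntropyOf_eq_zero_of_isEmpty T α]
    exact topEntropy_nonneg _
  · refine iSup₂_le fun α hα => ?_
    refine le_trans (limsup_lognat_mono (dir1_coverNum T hα hX)) ?_
    exact le_iSup₂ (f := fun β (_ : IsAdmissibleCover β) => coverEntropyOf (onePointExt T) β)
      (extSet '' α) (extCover_admissible hα hX)

theorem dir2_top (T : X → X) (hT : IsProper T) :
    topEntropy (onePointExt T) ≤ topEntropy T := by
  refine iSup₂_le fun β hβ => ?_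
  have hinf : OnePoint.infty ∈ ⋃₀ β := by rw [hβ.2.2.1]; trivial
  obtain ⟨Binf, hBmem, hBinf⟩ := hinf
  refine ereal_le_of_forall_log2_div (topEntropy_nonneg T) fun m hm => ?_
  set αm : Set (Set X) :=
    (fun E => OnePoint.some ⁻¹' E ∪ (⋃ j : Fin m, T^[j.val] ⁻¹' (OnePoint.some ⁻¹' Binf)ᶜ)ᶜ) ''
      (coverIter (onePointExt T) β m) with hαm
  have hbound : ∀ n : ℕ,
      coverNum (coverIter (onePointExt T) β (n * m)) ≤
        2 ^ n * coverNum (coverIter T αm (n * m)) + 1 :=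
    fun n => dir2_coverNum T hT β hβ hBmem hBinf m hm n
  have hmono : Monotone (fun N => coverNum (coverIter (onePointExt T) β N)) :=
    fun a b hab => coverNum_coverIter_mono (onePointExt T) β hβ.1 hβ.2.2.1 hab
  have hana := analytic_lemma (fun N => coverNum (coverIter (onePointExt T) β N))
    (fun N => coverNum (coverIter T αm N)) m hm hmono hbound
  refine le_trans hana ?_
  refine add_le_add le_rfl ?_
  exact le_iSup₂ (f := fun α (_ : IsAdmissibleCover α) => coverEntropyOf T α)
    αm (αm_admissible hT hβ hBmem hBinf m)

end Assembly


/-- for a proper map `T` on a locally compact separable space,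
the topological entropy of `T` equals that of its extension `T̃` to the
one-point compactification. -/
theorem topEntropy_eq_topEntropy_onePoint {X : Type*} [TopologicalSpace X]
    [LocallyCompactSpace X] [TopologicalSpace.SeparableSpace X]
    (T : X → X) (hT : IsProper T) :
    topEntropy T = topEntropy (onePointExt T) :=
  le_antisymm (dir1_top T) (dir2_top T hT)
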